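/- If μ is a matching that complies with eligibility requirements, is non-wasteful, and respects priorities, then the vector f̲^μ defined by f̲^μ_c = min_{π_c} { i ∈ μ(I) : i π_c x_c } if x_c := max_{π_c}((I ∖ μ(I)) ∪ {∅}) is not ∅ and f̲^μ_c = ∅ otherwise, is the minimum equilibrium cutoff vector supporting μ: (f̲^μ, μ) is a cutoff equilibrium, and for every cutoff equilibrium (f, μ) and every category c, f_c weakly-π_c f̲^μ_c. -/

import Mathlib

open Finset

section ReserveSystem

variable {I C : Type*} [Fintype I] [DecidableEq I] [Fintype C] [DecidableEq C]

/-- Patient `i` is eligible for category `c` (i.e. `i π_c ∅`). Priorities are encoded by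
injective score functions `pr c : Option I → ℕ`, where `none` stands for `∅` and a
higher score means a higher priority. -/
def Elig (pr : C → Option I → ℕ) (c : C) (i : I) : Prop :=
  pr c none < pr c (some i)

instance (pr : C → Option I → ℕ) (c : C) (i : I) : Decidable (Elig pr c i) := by
  unfold Elig; infer_instance

/-- A matching assigns each patient a category or `none`, respecting capacities `r`. -/
def IsMatching (r : C → ℕ) (μ : I → Option C) : Prop :=
  ∀ c : C, (univ.filter (fun i => μ i = some c)).card ≤ r c

/-- `μ` complies with eligibility requirements. -/
def CompliesEligibility (pr : C → Option I → ℕ) (μ : I → Option C) : Prop :=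
  ∀ i c, μ i = some c → Elig pr c i

/-- `μ` is non-wasteful. -/
def NonWasteful (pr : C → Option I → ℕ) (r : C → ℕ) (μ : I → Option C) : Prop :=
  ∀ i c, Elig pr c i → μ i = none →
    (univ.filter (fun j => μ j = some c)).card = r c

/-- `μ` respects priorities. -/
def RespectsPriorities (pr : C → Option I → ℕ) (μ : I → Option C) : Prop :=
  ∀ i i' c, μ i = some c → μ i' = none → pr c (some i') < pr c (some i)

/-- A cutoff vector: `f c ∈ I ∪ {∅}` with `f c` weakly `π_c`-above `∅`. -/
def IsCutoffVector (pr : C → Option I → ℕ) (f : C → Option I) : Prop :=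
  ∀ c, pr c none ≤ pr c (f c)

/-- `c` belongs to the budget set `B_i(f)`. -/
def InBudget (pr : C → Option I → ℕ) (f : C → Option I) (i : I) (c : C) : Prop :=
  pr c (f c) ≤ pr c (some i)

/-- `(f, μ)` is a cutoff equilibrium: `f` is a cutoff vector, every matched patient is
matched to a category in her budget set, every patient with a nonempty budget set is
matched to a category in her budget set, and every category with unfilled capacity has
cutoff `∅`. -/
def CutoffEquilibrium (pr : C → Option I → ℕ) (r : C → ℕ) (f : C → Option I)
    (μ : I → Option C) : Prop :=
  IsCutoffVector pr f ∧
  (∀ i c, μ i = some c → InBudget pr f i c) ∧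
  (∀ i, (∃ c, InBudget pr f i c) → ∃ c, μ i = some c ∧ InBudget pr f i c) ∧
  (∀ c, (univ.filter (fun i => μ i = some c)).card < r c → f c = none)

/-- `f` is the minimum cutoff vector `f̲^μ` of matching `μ`:
if `x_c := max_{π_c}((I ∖ μ(I)) ∪ {∅})` is a patient, then
`f̲^μ_c = min_{π_c} { i ∈ μ(I) : i π_c x_c }`, and `f̲^μ_c = ∅` otherwise. -/
def IsMinCutoff (pr : C → Option I → ℕ) (μ : I → Option C) (f : C → Option I) : Prop :=
  ∀ c, ((∃ x, μ x = none ∧ pr c none < pr c (some x) ∧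
          (∀ y, μ y = none → pr c (some y) ≤ pr c (some x)) ∧
          ∃ m, f c = some m ∧ μ m ≠ none ∧ pr c (some x) < pr c (some m) ∧
            ∀ j, μ j ≠ none → pr c (some x) < pr c (some j) →
              pr c (some m) ≤ pr c (some j))
    ∨ ((∀ x, μ x = none → pr c (some x) < pr c none) ∧ f c = none))

/-- `f̲^μ` is the minimum equilibrium cutoff vector supporting `μ`. -/
theorem min_cutoff_is_minimum_equilibrium
    (pr : C → Option I → ℕ) (hpr : ∀ c, Function.Injective (pr c))
    (r : C → ℕ) (μ : I → Option C) (hμ : IsMatching r μ)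
    (h1 : CompliesEligibility pr μ) (h2 : NonWasteful pr r μ)
    (h3 : RespectsPriorities pr μ)
    (fmin : C → Option I) (hfmin : IsMinCutoff pr μ fmin) :
    CutoffEquilibrium pr r fmin μ ∧
      ∀ f : C → Option I, CutoffEquilibrium pr r f μ →
        ∀ c, pr c (fmin c) ≤ pr c (f c) := by
  have part2 : ∀ i c, μ i = some c → InBudget pr fmin i c := by
    intro i c hi
    rcases hfmin c with ⟨x, hx0, hx1, hx2, m, hm, hm1, hm2, hm3⟩ | ⟨hall, hfc⟩
    · have hine : μ i ≠ none := by simp [hi]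
      have hxi := h3 i x c hi hx0
      have := hm3 i hine hxi
      unfold InBudget; rw [hm]; exact this
    · unfold InBudget; rw [hfc]; exact le_of_lt (h1 i c hi)
  constructor
  · refine ⟨?_, part2, ?_, ?_⟩
    · intro c
      rcases hfmin c with ⟨x, hx0, hx1, hx2, m, hm, hm1, hm2, hm3⟩ | ⟨hall, hfc⟩
      · rw [hm]; exact le_of_lt (hx1.trans hm2)
      · rw [hfc]
    · rintro i ⟨c, hc⟩
      cases hμi : μ i with
      | some c' => exact ⟨c', rfl, part2 i c' hμi⟩
      | none =>
        exfalso
        rcases hfmin c with ⟨x, hx0, hx1, hx2, m, hm, hm1, hm2, hm3⟩ | ⟨hall, hfc⟩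
        · have h4 := hx2 i hμi
          unfold InBudget at hc; rw [hm] at hc
          omega
        · unfold InBudget at hc; rw [hfc] at hc
          have := hall i hμi; omega
    · intro c hcard
      rcases hfmin c with ⟨x, hx0, hx1, hx2, m, hm, hm1, hm2, hm3⟩ | ⟨hall, hfc⟩
      · exfalso; have := h2 x c hx1 hx0; omega
      · exact hfc
  · intro f hf c
    obtain ⟨hcv, hmb, hne, hcap⟩ := hf
    rcases hfmin c with ⟨x, hx0, hx1, hx2, m, hm, hm1, hm2, hm3⟩ | ⟨hall, hfc⟩
    · have hxnb : ¬ InBudget pr f x c := by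
        intro hib
        obtain ⟨c', hc', _⟩ := hne x ⟨c, hib⟩
        rw [hx0] at hc'; exact Option.some_ne_none c' hc'.symm
      unfold InBudget at hxnb
      push_neg at hxnb
      rw [hm]
      cases hfc : f c with
      | none =>
        exfalso; rw [hfc] at hxnb; omega
      | some j =>
        rw [hfc] at hxnb
        have hjm : μ j ≠ none := by
          intro hj; have := hx2 j hj; omega
        exact hm3 j hjm hxnb
    · rw [hfc]; exact hcv c

end ReserveSystem
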